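/- In ZF: let T₁ be the theory of dense linear orders without endpoints with constants c_n satisfying c_n < c_{n+1}, and let p(x) = {c_n < x : n < ω}. If T₁ has a model with universe X in which some element realizes p(x) but no element is the <-least element realizing p(x), then T₁ has a model with universe X in which some element is the <-least element realizing p(x). -/

import Mathlib

open FirstOrder Language

/-- The vocabulary of the Ehrenfeucht example: the order symbol together with
constants `c_n` for `n < ω`. -/
abbrev EL : FirstOrder.Language := Language.order[[ℕ]]

instance : IsOrdered EL := ⟨Sum.inl leSymb⟩

/-- The constant `c_n`, as a closed term. -/
def cT (n : ℕ) : EL.Term (Empty ⊕ Fin 0) := Constants.term (Language.order.con n)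

/-- The Ehrenfeucht theory `T₁`: dense linear order without endpoints together with the
axioms `c_n < c_{n+1}` for all `n < ω`. -/
def T1 : EL.Theory :=
  (LHom.sumInl.onTheory Language.order.dlo) ∪
    Set.range (fun n : ℕ => (Term.lt (cT n) (cT (n + 1)) : EL.Sentence))

section
variable {X : Type*}

/-- The interpretation of `≤` in a structure `S` on `X`. -/
def Ele (S : EL.Structure X) (a b : X) : Prop :=
  @Structure.RelMap EL X S 2 (Sum.inl leSymb) ![a, b]

/-- The interpretation of `<` in a structure `S` on `X`. -/
def Elt (S : EL.Structure X) (a b : X) : Prop := Ele S a b ∧ a ≠ b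

/-- The interpretation of the constant `c_n` in a structure `S` on `X`. -/
def Econ (S : EL.Structure X) (n : ℕ) : X :=
  @Structure.funMap EL X S 0 (Language.order.con n) ![]

/-- `a` realizes the type `p(x) = {c_n < x : n < ω}` in the structure `S`. -/
def RealizesP (S : EL.Structure X) (a : X) : Prop := ∀ n : ℕ, Elt S (Econ S n) a

end


section
variable {X : Type*}

/-- Build an `EL`-structure from a binary relation and constants. -/
def mkS (le : X → X → Prop) (c : ℕ → X) : EL.Structure X where
  funMap {n} f := match n, f with
    | 0, Sum.inr k => fun _ => c k
    | _, Sum.inl f => f.elim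
    | _+1, Sum.inr f => f.elim
  RelMap {n} r := match n, r with
    | 2, Sum.inl .le => fun x => le (x 0) (x 1)
    | _, Sum.inr r => r.elim
theorem mkS_models (le : X → X → Prop) (c : ℕ → X)
    (hrefl : ∀ a, le a a) (htrans : ∀ a b d, le a b → le b d → le a d)
    (hanti : ∀ a b, le a b → le b a → a = b) (htot : ∀ a b, le a b ∨ le b a)
    (hnotop : ∀ a, ∃ b, ¬ le b a) (hnobot : ∀ a, ∃ b, ¬ le a b)
    (hdense : ∀ a b, (le a b ∧ ¬ le b a) → ∃ z, (le a z ∧ ¬ le z a) ∧ (le z b ∧ ¬ le b z))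
    (hc : ∀ n, le (c n) (c (n+1)) ∧ ¬ le (c (n+1)) (c n)) :
    @Theory.Model EL X (mkS le c) T1 := by
  letI S : EL.Structure X := mkS le c
  letI : LE X := ⟨le⟩
  letI : Preorder X := { le := le, le_refl := hrefl, le_trans := htrans }
  letI : PartialOrder X := { le_antisymm := hanti }
  letI : LinearOrder X := { le_total := htot, toDecidableLE := Classical.decRel _ }
  haveI : DenselyOrdered X := ⟨fun a b h => by
    obtain ⟨z, h1, h2⟩ := hdense a b ⟨le_of_lt h, not_le_of_gt h⟩
    exact ⟨z, lt_iff_le_not_ge.2 ⟨h1.1, h1.2⟩, lt_iff_le_not_ge.2 ⟨h2.1, h2.2⟩⟩⟩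
  haveI : NoTopOrder X := ⟨fun a => hnotop a⟩
  haveI : NoBotOrder X := ⟨fun a => hnobot a⟩
  letI Sr : Language.order.Structure X := @LHom.reduct Language.order EL LHom.sumInl X S
  haveI : Language.order.OrderedStructure X := ⟨fun x => by
    have : x = ![x 0, x 1] := by
      funext i; fin_cases i <;> rfl
    rw [this]; exact Iff.rfl⟩
  rw [T1]; apply Theory.model_union_iff.2
  constructor
  · exact (@LHom.onTheory_model Language.order EL X Sr S LHom.sumInl
      (@LHom.isExpansionOn_reduct Language.order EL LHom.sumInl X S) Language.order.dlo).2
      inferInstance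
  · rw [Theory.model_iff]
    rintro φ ⟨n, rfl⟩
    simp only [Sentence.Realize, cT, Term.lt, Term.le, Formula.Realize,
      BoundedFormula.realize_inf, BoundedFormula.realize_not,
      BoundedFormula.realize_rel₂, Term.realize_constants]
    exact hc n

theorem model_props (S : EL.Structure X) (h : @Theory.Model EL X S T1) :
    (∀ a, Ele S a a) ∧ (∀ a b d, Ele S a b → Ele S b d → Ele S a d) ∧
    (∀ a b, Ele S a b → Ele S b a → a = b) ∧ (∀ a b, Ele S a b ∨ Ele S b a) ∧
    (∀ a, ∃ b, ¬ Ele S b a) ∧ (∀ a, ∃ b, ¬ Ele S a b) ∧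
    (∀ a b, (Ele S a b ∧ ¬ Ele S b a) →
      ∃ z, (Ele S a z ∧ ¬ Ele S z a) ∧ (Ele S z b ∧ ¬ Ele S b z)) ∧
    (∀ n, Ele S (Econ S n) (Econ S (n+1)) ∧ ¬ Ele S (Econ S (n+1)) (Econ S n)) := by
  letI := S
  letI Sr : Language.order.Structure X := @LHom.reduct Language.order EL LHom.sumInl X S
  haveI hd : X ⊨ Language.order.dlo :=
    (@LHom.onTheory_model Language.order EL X Sr S LHom.sumInl
      (@LHom.isExpansionOn_reduct Language.order EL LHom.sumInl X S) Language.order.dlo).1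
      (h.mono Set.subset_union_left)
  have memlin : ∀ φ ∈ Language.order.linearOrderTheory, φ ∈ Language.order.dlo :=
    fun φ hφ => Set.mem_union_left _ hφ
  have hrefl : ∀ a, Ele S a a := by
    have := (Relations.realize_reflexive (r := (leSymb : Language.order.Relations 2))).1
      (Language.order.dlo.realize_sentence_of_mem (M := X) (memlin _ (by
      simp [linearOrderTheory, partialOrderTheory, preorderTheory])))
    exact fun a => this.refl a
  have htrans : ∀ a b d, Ele S a b → Ele S b d → Ele S a d := by
    have := (Relations.realize_transitive (r := (leSymb : Language.order.Relations 2))).1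
      (Language.order.dlo.realize_sentence_of_mem (M := X) (memlin _ (by
      simp [linearOrderTheory, partialOrderTheory, preorderTheory])))
    exact fun a b d hab hbd => this.trans _ _ _ hab hbd
  have hanti : ∀ a b, Ele S a b → Ele S b a → a = b := by
    have := (Relations.realize_antisymmetric (r := (leSymb : Language.order.Relations 2))).1
      (Language.order.dlo.realize_sentence_of_mem (M := X) (memlin _ (by
      simp [linearOrderTheory, partialOrderTheory, preorderTheory])))
    exact fun a b hab hba => this.antisymm _ _ hab hba
  have htot : ∀ a b, Ele S a b ∨ Ele S b a := by
    have := (Relations.realize_total (r := (leSymb : Language.order.Relations 2))).1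
      (Language.order.dlo.realize_sentence_of_mem (M := X) (memlin _ (by
      simp [linearOrderTheory, partialOrderTheory, preorderTheory])))
    exact fun a b => this.total a b
  letI : Preorder X :=
    { le := Ele S, le_refl := hrefl, le_trans := htrans }
  haveI hos : Language.order.OrderedStructure X := ⟨fun x => by
    have hx : x = ![x 0, x 1] := by funext i; fin_cases i <;> rfl
    rw [hx]; exact Iff.rfl⟩
  have hnotop : ∀ a : X, ∃ b, ¬ Ele S b a :=
    fun a => (Language.order.noTopOrder_of_dlo X).exists_not_le a
  have hnobot : ∀ a : X, ∃ b, ¬ Ele S a b :=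
    fun a => (Language.order.noBotOrder_of_dlo X).exists_not_ge a
  have hdense : ∀ a b : X, (Ele S a b ∧ ¬ Ele S b a) →
      ∃ z, (Ele S a z ∧ ¬ Ele S z a) ∧ (Ele S z b ∧ ¬ Ele S b z) := by
    have hD := Language.order.denselyOrdered_of_dlo X
    intro a b hab
    obtain ⟨z, h1, h2⟩ := hD.dense a b (lt_iff_le_not_ge.2 hab)
    exact ⟨z, lt_iff_le_not_ge.1 h1, lt_iff_le_not_ge.1 h2⟩
  have hcon : ∀ n, Ele S (Econ S n) (Econ S (n+1)) ∧ ¬ Ele S (Econ S (n+1)) (Econ S n) := by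
    intro n
    have hmem : (Term.lt (cT n) (cT (n + 1)) : EL.Sentence) ∈ T1 :=
      Set.mem_union_right _ ⟨n, rfl⟩
    have := T1.realize_sentence_of_mem (M := X) hmem
    simp only [Sentence.Realize, cT, Term.lt, Term.le, Formula.Realize,
      BoundedFormula.realize_inf, BoundedFormula.realize_not,
      BoundedFormula.realize_rel₂, Term.realize_constants] at this
    have he : ∀ m, (Language.order.con m : X) = Econ S m := by
      intro m
      show Structure.funMap _ _ = _
      unfold Econ
      exact congrArg _ (Subsingleton.elim _ _)
    rw [he n, he (n+1)] at this
    exact this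
  exact ⟨hrefl, htrans, hanti, htot, hnotop, hnobot, hdense, hcon⟩

end

/-- (ZF) If `T₁` has a model with universe `X` in which `p(x) = {c_n < x : n < ω}` is
realized but has no `<`-least realization, then `T₁` has a model with universe `X` with a
`<`-least realization of `p(x)`. -/
theorem exists_model_with_least_realization (X : Type*)
    (h : ∃ S : EL.Structure X, @Theory.Model EL X S T1 ∧
      (∃ a : X, RealizesP S a) ∧
      ¬ ∃ a : X, RealizesP S a ∧ ∀ b : X, RealizesP S b → Ele S a b) :
    ∃ S : EL.Structure X, @Theory.Model EL X S T1 ∧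
      ∃ a : X, RealizesP S a ∧ ∀ b : X, RealizesP S b → Ele S a b := by
  classical
  obtain ⟨S, hS, ⟨a, ha⟩, hno⟩ := h
  obtain ⟨hrefl, htrans, hanti, htot, hnotop, hnobot, hdense, hcon⟩ := model_props S hS
  set le : X → X → Prop := Ele S with hle
  set c : ℕ → X := Econ S with hc
  set lt : X → X → Prop := fun x y => le x y ∧ ¬ le y x with hlt
  have lt_trans' : ∀ {u v w}, lt u v → lt v w → lt u w := by
    rintro u v w ⟨h1, h2⟩ ⟨h3, h4⟩
    exact ⟨htrans _ _ _ h1 h3, fun hwu => h4 (htrans _ _ _ hwu h1)⟩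
  have lt_ne : ∀ {u v}, lt u v → u ≠ v := by
    rintro u v ⟨h1, h2⟩ rfl; exact h2 h1
  have elt_iff : ∀ {u v}, Elt S u v ↔ lt u v := by
    intro u v
    constructor
    · rintro ⟨h1, h2⟩; exact ⟨h1, fun hvu => h2 (hanti _ _ h1 hvu)⟩
    · rintro ⟨h1, h2⟩; exact ⟨h1, fun e => h2 (e ▸ hrefl u)⟩
  set P : X → Prop := RealizesP S with hP
  have hPup : ∀ x y, P x → le x y → P y := by
    intro x y hx hxy n
    exact elt_iff.2 ⟨htrans _ _ _ (elt_iff.1 (hx n)).1 hxy,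
      fun hyc => (elt_iff.1 (hx n)).2 (htrans _ _ _ hxy hyc)⟩
  have hcQ : ∀ n, ¬ P (c n) := fun n hn => (hn n).2 rfl
  have hPa : P a := ha
  have hnoleast : ∀ b, P b → ∃ z, P z ∧ lt z b := by
    intro b hb
    push_neg at hno
    obtain ⟨z, hz, hnle⟩ := hno b hb
    have hzb : le z b := (htot b z).resolve_left hnle
    exact ⟨z, hz, hzb, hnle⟩
  have hQnomax : ∀ x, ¬ P x → ∃ m, ¬ P m ∧ lt x m := by
    intro x hx
    rw [hP, RealizesP, not_forall] at hx
    obtain ⟨n, hn⟩ := hx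
    rcases htot x (c n) with hxc | hcx
    · refine ⟨c (n+1), hcQ _, htrans _ _ _ hxc (hcon n).1, fun hle => (hcon n).2 ?_⟩
      exact htrans _ _ _ hle hxc
    · have : c n = x := by
        by_contra hne
        exact hn ⟨hcx, hne⟩
      subst this
      exact ⟨c (n+1), hcQ _, (hcon n).1, (hcon n).2⟩
  -- the new order
  set idx : X → ℕ := fun x => if P x then (if x = a then 1 else 2) else 0 with hidx
  set le' : X → X → Prop := fun x y => idx x < idx y ∨ (idx x = idx y ∧ le x y) with hle'
  have idxQ : ∀ {x}, ¬ P x → idx x = 0 := fun hx => by simp [hidx, hx]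
  have idxa : idx a = 1 := by simp [hidx, hPa]
  have idxP : ∀ {x}, P x → x ≠ a → idx x = 2 := fun hx hne => by simp [hidx, hx, hne]
  have idx_eq_one : ∀ {x}, idx x = 1 → x = a := by
    intro x hx
    by_cases h1 : P x
    · by_cases h2 : x = a
      · exact h2
      · rw [idxP h1 h2] at hx; omega
    · rw [idxQ h1] at hx; omega
  have idx_pos : ∀ {x}, 0 < idx x → P x := by
    intro x hx
    by_contra h1
    rw [idxQ h1] at hx; omega
  have ltlt' : ∀ u v, idx u < idx v → (le' u v ∧ ¬ le' v u) := by
    intro u v huv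
    exact ⟨Or.inl huv, fun hvu => by rcases hvu with h | ⟨h, _⟩ <;> omega⟩
  have ltle' : ∀ u v, idx u = idx v → lt u v → (le' u v ∧ ¬ le' v u) := by
    intro u v he hl
    refine ⟨Or.inr ⟨he, hl.1⟩, fun hvu => ?_⟩
    rcases hvu with h | ⟨_, h⟩
    · omega
    · exact hl.2 h
  have lt'_cases : ∀ {u v}, le' u v → ¬ le' v u →
      idx u < idx v ∨ (idx u = idx v ∧ lt u v) := by
    intro u v h1 h2
    rcases h1 with h | ⟨he, hl⟩
    · exact Or.inl h
    · refine Or.inr ⟨he, hl, fun hvu => h2 (Or.inr ⟨he.symm, hvu⟩)⟩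
  -- three facts giving elements above / below in the new order
  have habove : ∀ x, P x → ∃ y, P y ∧ y ≠ a ∧ lt x y := by
    intro x hx
    obtain ⟨y, hy⟩ := hnotop x
    have hxy : lt x y := ⟨(htot x y).resolve_right hy, hy⟩
    have hyP : P y := hPup x y hx hxy.1
    by_cases hya : y = a
    · subst hya
      obtain ⟨z, hz⟩ := hnotop y
      have hyz : lt y z := ⟨(htot y z).resolve_right hz, hz⟩
      exact ⟨z, hPup y z hyP hyz.1, fun e => hyz.2 (e ▸ hrefl y),
        lt_trans' hxy hyz⟩
    · exact ⟨y, hyP, hya, hxy⟩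
  have hrefl' : ∀ x, le' x x := fun x => Or.inr ⟨rfl, hrefl x⟩
  have htrans' : ∀ x y z, le' x y → le' y z → le' x z := by
    rintro x y z (h1 | ⟨h1, h1'⟩) (h2 | ⟨h2, h2'⟩)
    · exact Or.inl (by omega)
    · exact Or.inl (by omega)
    · exact Or.inl (by omega)
    · exact Or.inr ⟨by omega, htrans _ _ _ h1' h2'⟩
  have hanti' : ∀ x y, le' x y → le' y x → x = y := by
    rintro x y (h1 | ⟨h1, h1'⟩) (h2 | ⟨h2, h2'⟩)
    · omega
    · omega
    · omega
    · exact hanti _ _ h1' h2'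
  have htot' : ∀ x y, le' x y ∨ le' y x := by
    intro x y
    rcases Nat.lt_trichotomy (idx x) (idx y) with h | h | h
    · exact Or.inl (Or.inl h)
    · rcases htot x y with h' | h'
      · exact Or.inl (Or.inr ⟨h, h'⟩)
      · exact Or.inr (Or.inr ⟨h.symm, h'⟩)
    · exact Or.inr (Or.inl h)
  have hnotop' : ∀ x, ∃ y, ¬ le' y x := by
    intro x
    by_cases hx : P x
    · obtain ⟨y, hyP, hya, hxy⟩ := habove x hx
      by_cases hxa : x = a
      · exact ⟨y, (ltlt' x y (by rw [idxP hyP hya, hxa, idxa]; omega)).2⟩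
      · exact ⟨y, (ltle' x y (by rw [idxP hyP hya, idxP hx hxa]) hxy).2⟩
    · obtain ⟨m, hmQ, hxm⟩ := hQnomax x hx
      exact ⟨m, (ltle' x m (by rw [idxQ hx, idxQ hmQ]) hxm).2⟩
  have hnobot' : ∀ x, ∃ y, ¬ le' x y := by
    intro x
    by_cases hx : P x
    · refine ⟨c 0, ?_⟩
      have h0 : idx (c 0) = 0 := idxQ (hcQ 0)
      have h1 : 0 < idx x := by
        by_cases hxa : x = a
        · rw [hxa, idxa]; omega
        · rw [idxP hx hxa]; omega
      rintro (h | ⟨h, _⟩) <;> omega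
    · obtain ⟨y, hy⟩ := hnobot x
      have hyx : lt y x := ⟨(htot x y).resolve_left hy, hy⟩
      have hyQ : ¬ P y := fun hyP => hx (hPup y x hyP hyx.1)
      exact ⟨y, (ltle' y x (by rw [idxQ hyQ, idxQ hx]) hyx).2⟩
  have hdense' : ∀ x y, (le' x y ∧ ¬ le' y x) →
      ∃ z, (le' x z ∧ ¬ le' z x) ∧ (le' z y ∧ ¬ le' y z) := by
    intro x y hxy
    rcases lt'_cases hxy.1 hxy.2 with hlt | ⟨heq, hl⟩
    · -- strictly smaller index
      by_cases hyP : P y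
      · by_cases hya : y = a
        · -- x has index 0, y = a : interpolate within Q
          have hx0 : idx x = 0 := by rw [hya, idxa] at hlt; omega
          have hxQ : ¬ P x := fun hxP => by
            by_cases hxa : x = a
            · rw [hxa, idxa] at hx0; omega
            · rw [idxP hxP hxa] at hx0; omega
          obtain ⟨m, hmQ, hxm⟩ := hQnomax x hxQ
          exact ⟨m, ltle' x m (by rw [idxQ hxQ, idxQ hmQ]) hxm,
            ltlt' m y (by rw [idxQ hmQ, hya, idxa]; omega)⟩
        · have hy2 : idx y = 2 := idxP hyP hya
          by_cases hxa : x = a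
          · -- x = a, y ∈ P \ {a} : use no least realizer
            obtain ⟨z, hzP, hzy⟩ := hnoleast y hyP
            by_cases hza : z = a
            · obtain ⟨w, hwP, hwa⟩ := hnoleast a hPa
              have hwa' : w ≠ a := lt_ne hwa
              have hwy : lt w y := lt_trans' hwa (hza ▸ hzy)
              exact ⟨w, ltlt' x w (by rw [hxa, idxa, idxP hwP hwa']; omega),
                ltle' w y (by rw [idxP hwP hwa', hy2]) hwy⟩
            · exact ⟨z, ltlt' x z (by rw [hxa, idxa, idxP hzP hza]; omega),
                ltle' z y (by rw [idxP hzP hza, hy2]) hzy⟩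
          · -- x has index 0 (x ∉ P), y has index 2 : a is between
            have hx0 : idx x = 0 := by
              by_cases hxP : P x
              · rw [idxP hxP hxa, hy2] at hlt; omega
              · exact idxQ hxP
            exact ⟨a, ltlt' x a (by rw [hx0, idxa]; omega),
              ltlt' a y (by rw [idxa, hy2]; omega)⟩
      · -- idx y = 0, impossible since idx x < idx y
        rw [idxQ hyP] at hlt; omega
    · -- equal indices, old strict inequality
      by_cases hxP : P x
      · by_cases hxa : x = a
        · -- x = a = y, contradiction
          have : y = a := idx_eq_one (by rw [← heq, hxa, idxa])
          exact absurd (this ▸ hxa ▸ hl) (fun h => h.2 (hrefl _))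
        · have hx2 : idx x = 2 := idxP hxP hxa
          have hy2 : idx y = 2 := by omega
          obtain ⟨z, hz1, hz2⟩ := hdense x y hl
          have hzP : P z := hPup x z hxP hz1.1
          by_cases hza : z = a
          · obtain ⟨w, hw1, hw2⟩ := hdense x z hz1
            have hwP : P w := hPup x w hxP hw1.1
            have hwa : w ≠ a := fun e => lt_ne hw2 (e.trans hza.symm)
            exact ⟨w, ltle' x w (by rw [hx2, idxP hwP hwa]) hw1,
              ltle' w y (by rw [idxP hwP hwa, hy2]) (lt_trans' hw2 hz2)⟩
          · exact ⟨z, ltle' x z (by rw [hx2, idxP hzP hza]) hz1,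
              ltle' z y (by rw [idxP hzP hza, hy2]) hz2⟩
      · -- both outside P
        have hx0 : idx x = 0 := idxQ hxP
        obtain ⟨z, hz1, hz2⟩ := hdense x y hl
        have hyQ : ¬ P y := by
          intro hyP
          by_cases hya : y = a
          · rw [hya, idxa] at heq; omega
          · rw [idxP hyP hya] at heq; omega
        have hzQ : ¬ P z := fun hzP => hyQ (hPup z y hzP hz2.1)
        exact ⟨z, ltle' x z (by rw [hx0, idxQ hzQ]) hz1,
          ltle' z y (by rw [idxQ hzQ, ← heq, hx0]) hz2⟩
  have hc' : ∀ n, le' (c n) (c (n+1)) ∧ ¬ le' (c (n+1)) (c n) :=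
    fun n => ltle' _ _ (by rw [idxQ (hcQ n), idxQ (hcQ (n+1))]) (hcon n)
  refine ⟨mkS le' c, mkS_models le' c hrefl' htrans' hanti' htot' hnotop' hnobot' hdense' hc',
    a, ?_, ?_⟩
  · intro n
    refine ⟨?_, ?_⟩
    · show le' (c n) a
      exact Or.inl (by rw [idxQ (hcQ n), idxa]; omega)
    · exact fun e => hcQ n ((show (c n : X) = a from e).symm ▸ hPa)
  · intro b hb
    have hbP : P b := by
      by_cases hbP : P b
      · exact hbP
      · intro n
        have hn := hb n
        have h1 : le' (c n) b := hn.1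
        have h2 : (c n : X) ≠ b := hn.2
        rcases h1 with h | ⟨_, h⟩
        · rw [idxQ (hcQ n), idxQ hbP] at h; omega
        · exact ⟨h, h2⟩
    show le' a b
    by_cases hba : b = a
    · rw [hba]; exact hrefl' a
    · exact Or.inl (by rw [idxa, idxP hbP hba]; omega)
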